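/- (Theorem 1 of the paper.) Let f : ℝ² → ℝ be measurable with Radon transform R f(θ, τ) = ∫_{s∈ℝ} f(τ cos θ − s sin θ, τ sin θ + s cos θ) ds, let h : ℝ → ℝ be a measurable kernel, and define S_h(θ, τ) = ∫_{u∈ℝ} R f(θ, τ − u) · h(u) du and the magnitude spectrum A(θ, ω) = ‖∫_{τ∈ℝ} S_h(θ, τ) · exp(−i ω τ) dτ‖. Let α ∈ ℝ, t = (Δx, Δy) ∈ ℝ², and f'(X) = f(R_α X − t) where R_α is rotation by α; let A' be the magnitude spectrum built from f' by the same construction. Then for all θ, ω ∈ ℝ, A'(θ, ω) = A(θ + α, ω): the magnitude spectrum A is rotation equivariant and translation invariant. -/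

import Mathlib

open MeasureTheory

/-- The Radon transform of `f : ℝ² → ℝ`:
`R f (θ, τ) = ∫ s, f (τ cos θ − s sin θ, τ sin θ + s cos θ) ds`. -/
noncomputable def radon (f : ℝ × ℝ → ℝ) (θ τ : ℝ) : ℝ :=
  ∫ s : ℝ, f (τ * Real.cos θ - s * Real.sin θ, τ * Real.sin θ + s * Real.cos θ)

/-- Rotation of ℝ² by angle `α`: `R_α (x, y) = (x cos α − y sin α, x sin α + y cos α)`. -/
noncomputable def rot (α : ℝ) (X : ℝ × ℝ) : ℝ × ℝ :=
  (X.1 * Real.cos α - X.2 * Real.sin α, X.1 * Real.sin α + X.2 * Real.cos α)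

/-- Per-angle 1D convolution of the sinogram of `f` with the kernel `h` along
the `τ` variable: `S_h (θ, τ) = ∫ u, R f (θ, τ − u) · h u du`. -/
noncomputable def sinoConv (f : ℝ × ℝ → ℝ) (h : ℝ → ℝ) (θ τ : ℝ) : ℝ :=
  ∫ u : ℝ, radon f θ (τ - u) * h u

/-- Magnitude spectrum: the modulus of the 1D Fourier transform of
`S_h (θ, ·)` in the `τ` variable, `A (θ, ω) = ‖∫ τ, S_h (θ, τ) exp (−iωτ) dτ‖`. -/
noncomputable def magSpec (f : ℝ × ℝ → ℝ) (h : ℝ → ℝ) (θ ω : ℝ) : ℝ :=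
  ‖∫ τ : ℝ, (sinoConv f h θ τ : ℂ) * Complex.exp (-(Complex.I * (ω : ℂ) * (τ : ℂ)))‖

lemma radon_shift (f : ℝ × ℝ → ℝ) (α Δx Δy θ τ : ℝ) :
    radon (fun X => f (rot α X - (Δx, Δy))) θ τ
      = radon f (θ + α) (τ - (Δx * Real.cos (θ + α) + Δy * Real.sin (θ + α))) := by
  unfold radon rot
  set c := Δx * Real.cos (θ + α) + Δy * Real.sin (θ + α) with hc
  set d := -Δx * Real.sin (θ + α) + Δy * Real.cos (θ + α) with hd
  have key : ∀ s : ℝ,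
      ((τ * Real.cos θ - s * Real.sin θ, τ * Real.sin θ + s * Real.cos θ).1 * Real.cos α
          - (τ * Real.cos θ - s * Real.sin θ, τ * Real.sin θ + s * Real.cos θ).2 * Real.sin α,
        (τ * Real.cos θ - s * Real.sin θ, τ * Real.sin θ + s * Real.cos θ).1 * Real.sin α
          + (τ * Real.cos θ - s * Real.sin θ, τ * Real.sin θ + s * Real.cos θ).2 * Real.cos α)
          - (Δx, Δy)
      = ((τ - c) * Real.cos (θ + α) - (s - d) * Real.sin (θ + α),
         (τ - c) * Real.sin (θ + α) + (s - d) * Real.cos (θ + α)) := by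
    intro s
    rw [hc, hd, Prod.mk_sub_mk, Prod.mk.injEq]
    constructor
    · rw [Real.cos_add, Real.sin_add]
      linear_combination Δx * (Real.sin_sq_add_cos_sq θ) * (Real.sin α ^ 2 + Real.cos α ^ 2)
        + Δx * Real.sin_sq_add_cos_sq α
    · rw [Real.cos_add, Real.sin_add]
      linear_combination Δy * (Real.sin_sq_add_cos_sq θ) * (Real.sin α ^ 2 + Real.cos α ^ 2)
        + Δy * Real.sin_sq_add_cos_sq α
  calc (∫ s : ℝ, f (((τ * Real.cos θ - s * Real.sin θ, τ * Real.sin θ + s * Real.cos θ).1 * Real.cos α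
          - (τ * Real.cos θ - s * Real.sin θ, τ * Real.sin θ + s * Real.cos θ).2 * Real.sin α,
        (τ * Real.cos θ - s * Real.sin θ, τ * Real.sin θ + s * Real.cos θ).1 * Real.sin α
          + (τ * Real.cos θ - s * Real.sin θ, τ * Real.sin θ + s * Real.cos θ).2 * Real.cos α)
          - (Δx, Δy)))
      = ∫ s : ℝ, f ((τ - c) * Real.cos (θ + α) - (s - d) * Real.sin (θ + α),
          (τ - c) * Real.sin (θ + α) + (s - d) * Real.cos (θ + α)) := by
        exact integral_congr_ae (Filter.Eventually.of_forall fun s => by dsimp only; rw [key s])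
    _ = ∫ s : ℝ, f ((τ - c) * Real.cos (θ + α) - s * Real.sin (θ + α),
          (τ - c) * Real.sin (θ + α) + s * Real.cos (θ + α)) :=
        integral_sub_right_eq_self
          (fun s => f ((τ - c) * Real.cos (θ + α) - s * Real.sin (θ + α),
            (τ - c) * Real.sin (θ + α) + s * Real.cos (θ + α))) d

lemma sinoConv_shift (f : ℝ × ℝ → ℝ) (h : ℝ → ℝ) (α Δx Δy θ τ : ℝ) :
    sinoConv (fun X => f (rot α X - (Δx, Δy))) h θ τ
      = sinoConv f h (θ + α) (τ - (Δx * Real.cos (θ + α) + Δy * Real.sin (θ + α))) := by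
  unfold sinoConv
  refine integral_congr_ae (Filter.Eventually.of_forall fun u => ?_)
  dsimp only
  rw [radon_shift]
  ring_nf

/-- Theorem 1 of the paper: the magnitude spectrum is rotation equivariant and
translation invariant: for `f' X = f (R_α X − t)`,
`A' (θ, ω) = A (θ + α, ω)`. -/
theorem magSpec_rotation_equivariant_translation_invariant
    (f : ℝ × ℝ → ℝ) (h : ℝ → ℝ) (hf : Measurable f) (hh : Measurable h)
    (α Δx Δy θ ω : ℝ) :
    magSpec (fun X => f (rot α X - (Δx, Δy))) h θ ω = magSpec f h (θ + α) ω := by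
  unfold magSpec
  set c := Δx * Real.cos (θ + α) + Δy * Real.sin (θ + α) with hc
  have step1 : (∫ τ : ℝ, ((sinoConv (fun X => f (rot α X - (Δx, Δy))) h θ τ : ℂ)
        * Complex.exp (-(Complex.I * (ω : ℂ) * (τ : ℂ)))))
      = ∫ τ : ℝ, ((sinoConv f h (θ + α) (τ - c) : ℂ)
        * Complex.exp (-(Complex.I * (ω : ℂ) * (τ : ℂ)))) := by
    refine integral_congr_ae (Filter.Eventually.of_forall fun τ => ?_)
    dsimp only
    rw [sinoConv_shift]
  have step2 : (∫ τ : ℝ, ((sinoConv f h (θ + α) (τ - c) : ℂ)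
        * Complex.exp (-(Complex.I * (ω : ℂ) * (τ : ℂ)))))
      = ∫ τ : ℝ, ((sinoConv f h (θ + α) τ : ℂ)
        * Complex.exp (-(Complex.I * (ω : ℂ) * ((τ : ℂ) + (c : ℂ))))) := by
    have := integral_sub_right_eq_self (μ := volume)
      (fun τ : ℝ => ((sinoConv f h (θ + α) τ : ℂ)
        * Complex.exp (-(Complex.I * (ω : ℂ) * ((τ : ℂ) + (c : ℂ)))))) c
    rw [← this]
    refine integral_congr_ae (Filter.Eventually.of_forall fun τ => ?_)
    push_cast
    ring_nf
  have step3 : (∫ τ : ℝ, ((sinoConv f h (θ + α) τ : ℂ)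
        * Complex.exp (-(Complex.I * (ω : ℂ) * ((τ : ℂ) + (c : ℂ))))))
      = Complex.exp (-(Complex.I * (ω : ℂ) * (c : ℂ)))
        * ∫ τ : ℝ, ((sinoConv f h (θ + α) τ : ℂ)
            * Complex.exp (-(Complex.I * (ω : ℂ) * (τ : ℂ)))) := by
    rw [← integral_const_mul]
    refine integral_congr_ae (Filter.Eventually.of_forall fun τ => ?_)
    dsimp only
    rw [mul_add, neg_add, Complex.exp_add]
    ring
  rw [step1, step2, step3, norm_mul]
  have : ‖Complex.exp (-(Complex.I * (ω : ℂ) * (c : ℂ)))‖ = 1 := by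
    simp [Complex.norm_exp]
  rw [this, one_mul]
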